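/- arXiv:2410.11372 — 2 statements merged into one kernel-verified Lean document; each statement's English description precedes it below -/
import Mathlib

section
/- Among all probability distributions p on ℕ with mean exactly N (N real, N ≥ 0), the minimum of ∑ₙ pₙ ν^n for fixed ν ∈ (0,1) equals (1 - {N}) ν^⌊N⌋ + {N} ν^⌈N⌉, where {N} = N - ⌊N⌋, achieved by the distribution supported on ⌊N⌋ and ⌈N⌉. -/
-- key convexity inequality: the secant line through (a, ν^a), (a+1, ν^(a+1)) lies below ν^n
lemma key_ineq (ν : ℝ) (h0 : 0 < ν) (h1 : ν ≤ 1) (a n : ℕ) :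
    ν ^ a * (1 + (ν - 1) * ((n : ℝ) - (a : ℝ))) ≤ ν ^ n := by
  rcases le_total a n with h | h
  · obtain ⟨m, rfl⟩ := Nat.exists_eq_add_of_le h
    have hcast : ((a + m : ℕ) : ℝ) - (a : ℝ) = (m : ℝ) := by push_cast; ring
    rw [hcast, pow_add]
    have hb : 1 + (m : ℝ) * (ν - 1) ≤ (1 + (ν - 1)) ^ m := one_add_mul_le_pow (by linarith) m
    have hb' : 1 + (m : ℝ) * (ν - 1) ≤ ν ^ m := by
      have : (1 + (ν - 1)) = ν := by ring
      rwa [this] at hb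
    nlinarith [pow_nonneg h0.le a, pow_nonneg h0.le m]
  · obtain ⟨m, rfl⟩ := Nat.exists_eq_add_of_le h
    have hcast : ((n : ℕ) : ℝ) - ((n + m : ℕ) : ℝ) = -(m : ℝ) := by push_cast; ring
    rw [hcast, pow_add]
    have h2 : ν ^ m * (1 + (1 - ν) * (m : ℝ)) ≤ 1 := by
      have hb : 1 + (m : ℝ) * ((1 - ν) / ν) ≤ (1 + (1 - ν) / ν) ^ m :=
        one_add_mul_le_pow (le_trans (by norm_num) (div_nonneg (by linarith) h0.le)) m
      have hrw : 1 + (1 - ν) / ν = 1 / ν := by field_simp; ring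
      rw [hrw] at hb
      have t2 : ν ^ m * (1 / ν) ^ m = 1 := by
        rw [← mul_pow]; field_simp; simp
      have t1 : (1 - ν) * (m : ℝ) ≤ ((1 - ν) / ν) * (m : ℝ) := by
        apply mul_le_mul_of_nonneg_right _ (Nat.cast_nonneg m)
        rw [le_div_iff₀ h0]
        nlinarith
      calc ν ^ m * (1 + (1 - ν) * (m : ℝ))
          ≤ ν ^ m * (1 + (m : ℝ) * ((1 - ν) / ν)) := by
            apply mul_le_mul_of_nonneg_left _ (pow_nonneg h0.le m); linarith
        _ ≤ ν ^ m * (1 / ν) ^ m := by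
            apply mul_le_mul_of_nonneg_left hb (pow_nonneg h0.le m)
        _ = 1 := t2
    nlinarith [pow_nonneg h0.le n, pow_pos h0 m]

lemma aux_hasSum (a b : ℕ) (c d : ℝ) (g : ℕ → ℝ) :
    HasSum (fun n => ((if n = a then c else 0) + (if n = b then d else 0)) * g n)
      (c * g a + d * g b) := by
  have heq : (fun n => ((if n = a then c else 0) + (if n = b then d else 0)) * g n)
      = fun n => (if n = a then c * g a else 0) + (if n = b then d * g b else 0) := by
    funext n
    by_cases h1 : n = a <;> by_cases h2 : n = b <;> simp_all <;> ring
  rw [heq]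
  exact (hasSum_ite_eq a (c * g a)).add (hasSum_ite_eq b (d * g b))

/-- Among all probability distributions p on ℕ with mean exactly N ≥ 0, the minimum
of ∑ₙ pₙ ν^n for ν ∈ (0,1) equals (1-{N}) ν^⌊N⌋ + {N} ν^⌈N⌉, achieved by the
distribution supported on ⌊N⌋ and ⌈N⌉. -/
theorem stmt_9 (ν : ℝ) (hν : ν ∈ Set.Ioo (0 : ℝ) 1) (N : ℝ) (hN : 0 ≤ N) :
    IsLeast
      {x : ℝ | ∃ p : ℕ → ℝ,
        (∀ n, 0 ≤ p n) ∧ Summable p ∧ (∑' n, p n) = 1 ∧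
        Summable (fun n : ℕ => (n : ℝ) * p n) ∧ (∑' n : ℕ, (n : ℝ) * p n) = N ∧
        Summable (fun n : ℕ => p n * ν ^ n) ∧ x = ∑' n : ℕ, p n * ν ^ n}
      ((1 - Int.fract N) * ν ^ (⌊N⌋₊) + Int.fract N * ν ^ (⌈N⌉₊)) := by
  obtain ⟨hν0, hν1⟩ := hν
  set a := ⌊N⌋₊ with ha_def
  set b := ⌈N⌉₊ with hb_def
  set f := Int.fract N with hf_def
  have hf0 : 0 ≤ f := Int.fract_nonneg N
  have hf1 : f < 1 := Int.fract_lt_one N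
  have haN : (a : ℝ) + f = N := by
    rw [ha_def, natCast_floor_eq_intCast_floor hN, hf_def]
    exact Int.floor_add_fract N
  have hb : f = 0 ∨ b = a + 1 := by
    by_cases hf : f = 0
    · exact Or.inl hf
    · right
      have hfpos : 0 < f := lt_of_le_of_ne hf0 (Ne.symm hf)
      rw [hb_def, Nat.ceil_eq_iff (Nat.succ_ne_zero a)]
      constructor
      · show ((a : ℕ) : ℝ) < N; linarith
      · push_cast; linarith
  have hfb : f * (b : ℝ) = f * ((a : ℝ) + 1) := by
    rcases hb with h | h
    · rw [h]; ring
    · rw [h]; push_cast; ring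
  have hfνb : f * ν ^ b = f * (ν ^ a * ν) := by
    rcases hb with h | h
    · rw [h]; ring
    · rw [h, pow_succ]
  constructor
  · -- membership: the two-point distribution
    refine ⟨fun n => (if n = a then 1 - f else 0) + (if n = b then f else 0), ?_, ?_, ?_, ?_, ?_, ?_, ?_⟩
    · intro n
      apply add_nonneg <;> split_ifs <;> linarith
    · exact ((hasSum_ite_eq a (1 - f)).add (hasSum_ite_eq b f)).summable
    · rw [((hasSum_ite_eq a (1 - f)).add (hasSum_ite_eq b f)).tsum_eq]; ring
    · have := aux_hasSum a b (1 - f) f (fun n => (n : ℝ))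
      have h2 : (fun n : ℕ => (n : ℝ) * ((if n = a then 1 - f else 0) + (if n = b then f else 0)))
          = fun n => ((if n = a then 1 - f else 0) + (if n = b then f else 0)) * (n : ℝ) := by
        funext n; ring
      rw [h2]; exact this.summable
    · have := aux_hasSum a b (1 - f) f (fun n => (n : ℝ))
      have h2 : (fun n : ℕ => (n : ℝ) * ((if n = a then 1 - f else 0) + (if n = b then f else 0)))
          = fun n => ((if n = a then 1 - f else 0) + (if n = b then f else 0)) * (n : ℝ) := by
        funext n; ring
      rw [h2, this.tsum_eq]
      have : (1 - f) * (a : ℝ) + f * (b : ℝ) = (a : ℝ) + f := by rw [hfb]; ring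
      rw [this, haN]
    · exact (aux_hasSum a b (1 - f) f (fun n => ν ^ n)).summable
    · exact ((aux_hasSum a b (1 - f) f (fun n => ν ^ n)).tsum_eq).symm
  · -- lower bound
    rintro x ⟨p, hp0, hp1, hp1', hp2, hp2', hp3, rfl⟩
    have hkey : ∀ n : ℕ,
        (ν ^ a * (1 + (ν - 1) * (-(a : ℝ)))) * p n + ((ν - 1) * ν ^ a) * ((n : ℝ) * p n)
          ≤ p n * ν ^ n := by
      intro n
      have h := mul_le_mul_of_nonneg_left (key_ineq ν hν0 hν1.le a n) (hp0 n)
      nlinarith [h]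
    have hSL : Summable (fun n : ℕ =>
        (ν ^ a * (1 + (ν - 1) * (-(a : ℝ)))) * p n + ((ν - 1) * ν ^ a) * ((n : ℝ) * p n)) :=
      (hp1.mul_left _).add (hp2.mul_left _)
    have hle := Summable.tsum_le_tsum hkey hSL hp3
    have hLS : (∑' n : ℕ, ((ν ^ a * (1 + (ν - 1) * (-(a : ℝ)))) * p n
        + ((ν - 1) * ν ^ a) * ((n : ℝ) * p n)))
        = (ν ^ a * (1 + (ν - 1) * (-(a : ℝ)))) * 1 + ((ν - 1) * ν ^ a) * N := by
      rw [Summable.tsum_add (hp1.mul_left _) (hp2.mul_left _), tsum_mul_left, tsum_mul_left, hp1', hp2']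
    rw [hLS] at hle
    have hgoal : (1 - f) * ν ^ a + f * ν ^ b
        = (ν ^ a * (1 + (ν - 1) * (-(a : ℝ)))) * 1 + ((ν - 1) * ν ^ a) * N := by
      rw [hfνb, ← haN]; ring
    linarith [hle, hgoal.le]
end

section
/- The ratio of error exponents χ_TMSV/χ_GCS, given approximately by (N_B+1)·(2(N_B + √(N_B(N_B+1))) + 1)/(2N_B+1)², is at least 1 for all N_B ≥ 0, and tends to 1 as N_B → 0 and as N_B → ∞. -/
private lemma sqrt_lb (N : ℝ) (hN : 0 ≤ N) : N ≤ Real.sqrt (N * (N + 1)) := by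
  have h := Real.sq_sqrt (by nlinarith : (0:ℝ) ≤ N * (N + 1))
  have h2 := Real.sqrt_nonneg (N * (N + 1))
  nlinarith

private lemma sqrt_ub (N : ℝ) (hN : 0 ≤ N) : Real.sqrt (N * (N + 1)) ≤ N + 1 := by
  have h := Real.sq_sqrt (by nlinarith : (0:ℝ) ≤ N * (N + 1))
  have h2 := Real.sqrt_nonneg (N * (N + 1))
  nlinarith

/-- The ratio of error exponents
f(N_B) = (N_B+1)(2(N_B + √(N_B(N_B+1))) + 1)/(2N_B+1)² is at least 1 for all
N_B ≥ 0, and tends to 1 as N_B → 0⁺ and as N_B → ∞. -/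
theorem stmt_12 :
    (∀ N_B : ℝ, 0 ≤ N_B →
      1 ≤ (N_B + 1) * (2 * (N_B + Real.sqrt (N_B * (N_B + 1))) + 1) / (2 * N_B + 1) ^ 2) ∧
    Filter.Tendsto
      (fun N_B : ℝ =>
        (N_B + 1) * (2 * (N_B + Real.sqrt (N_B * (N_B + 1))) + 1) / (2 * N_B + 1) ^ 2)
      (nhdsWithin 0 (Set.Ici 0)) (nhds 1) ∧
    Filter.Tendsto
      (fun N_B : ℝ =>
        (N_B + 1) * (2 * (N_B + Real.sqrt (N_B * (N_B + 1))) + 1) / (2 * N_B + 1) ^ 2)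
      Filter.atTop (nhds 1) := by
  set F : ℝ → ℝ := fun N_B =>
    (N_B + 1) * (2 * (N_B + Real.sqrt (N_B * (N_B + 1))) + 1) / (2 * N_B + 1) ^ 2 with hF
  have hlow : ∀ N_B : ℝ, 0 ≤ N_B → 1 ≤ F N_B := by
    intro N hN
    have hs := sqrt_lb N hN
    have hd : (0:ℝ) < (2 * N + 1) ^ 2 := by positivity
    rw [hF, one_le_div hd]
    nlinarith
  refine ⟨hlow, ?_, ?_⟩
  · -- limit at 0⁺
    have hc : ContinuousAt F 0 := by
      apply ContinuousAt.div
      · fun_prop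
      · fun_prop
      · norm_num
    have := hc.continuousWithinAt (s := Set.Ici 0)
    have h0 : F 0 = 1 := by simp [hF]
    simpa [h0] using this.tendsto
  · -- limit at ∞
    have hub : ∀ᶠ N : ℝ in Filter.atTop,
        F N ≤ (N + 1) * (4 * N + 3) / (2 * N + 1) ^ 2 := by
      filter_upwards [Filter.eventually_ge_atTop (0:ℝ)] with N hN
      have hs := sqrt_ub N hN
      have hd : (0:ℝ) < (2 * N + 1) ^ 2 := by positivity
      rw [hF]
      apply div_le_div_of_nonneg_right ?_ hd.le
      nlinarith
    have hub_t : Filter.Tendsto (fun N : ℝ => (N + 1) * (4 * N + 3) / (2 * N + 1) ^ 2)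
        Filter.atTop (nhds 1) := by
      have hu : Filter.Tendsto (fun t : ℝ => (1 + t) * (4 + 3 * t) / (2 + t) ^ 2)
          (nhds 0) (nhds 1) := by
        have : ContinuousAt (fun t : ℝ => (1 + t) * (4 + 3 * t) / (2 + t) ^ 2) 0 := by
          apply ContinuousAt.div
          · fun_prop
          · fun_prop
          · norm_num
        have h := this.tendsto
        norm_num at h
        exact h
      have hcomp := hu.comp tendsto_inv_atTop_zero
      apply hcomp.congr'
      filter_upwards [Filter.eventually_gt_atTop (0:ℝ)] with N hN
      have hN' : N ≠ 0 := ne_of_gt hN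
      simp only [Function.comp_apply]
      field_simp
    have hlow' : ∀ᶠ N : ℝ in Filter.atTop, (1:ℝ) ≤ F N := by
      filter_upwards [Filter.eventually_ge_atTop (0:ℝ)] with N hN using hlow N hN
    exact tendsto_of_tendsto_of_tendsto_of_le_of_le' tendsto_const_nhds hub_t hlow' hub
end
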